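/- Price monotonicity in the deadline: for every x ∈ ℝ₊^N, the marginal cost prices satisfy c_0 ≥ ζ_1(x) ≥ ζ_2(x) ≥ ⋯ ≥ ζ_N(x) ≥ 0. -/

import Mathlib

open MeasureTheory

/-- The residual process: `ξ_0 = 0`, `ξ_{k+1} = max{0, ξ_k} + s_k - x_{k+1}`. -/
noncomputable def resid (x s : ℕ → ℝ) : ℕ → ℝ
  | 0 => 0
  | k + 1 => max 0 (resid x s k) + s k - x (k + 1)

/-- The marginal cost price menu
`ζ_k(x) = c_0 [ P(ξ_k ≤ 0) + Σ_{t=k+1}^N P(ξ_k > 0, …, ξ_{t-1} > 0, ξ_t ≤ 0) ]`. -/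
noncomputable def zetaPrice (N : ℕ) {Ω : Type*} [MeasurableSpace Ω] (P : Measure Ω)
    (s : Ω → ℕ → ℝ) (c0 : ℝ) (x : ℕ → ℝ) (k : ℕ) : ℝ :=
  c0 * ((P {ω | resid x (s ω) k ≤ 0}).toReal +
    ∑ t ∈ Finset.Icc (k + 1) N,
      (P {ω | (∀ j, k ≤ j → j < t → 0 < resid x (s ω) j) ∧
        resid x (s ω) t ≤ 0}).toReal)

/-- Price monotonicity in the deadline: for every `x ∈ ℝ₊^N`, the
marginal cost prices satisfy `c_0 ≥ ζ_1(x) ≥ ζ_2(x) ≥ ⋯ ≥ ζ_N(x) ≥ 0`. -/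
theorem zeta_price_monotone
    (N : ℕ) (hN : 1 ≤ N)
    {Ω : Type*} [MeasurableSpace Ω] (P : Measure Ω) [IsProbabilityMeasure P]
    (s : Ω → ℕ → ℝ) (hmeas : Measurable s)
    (hs : ∀ ω, ∀ j, j < N → 0 ≤ s ω j)
    (x : ℕ → ℝ) (hx : ∀ j, 1 ≤ j → j ≤ N → 0 ≤ x j)
    (c0 : ℝ) (hc0 : 0 < c0) :
    zetaPrice N P s c0 x 1 ≤ c0 ∧
    (∀ k, 1 ≤ k → k < N → zetaPrice N P s c0 x (k + 1) ≤ zetaPrice N P s c0 x k) ∧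
    0 ≤ zetaPrice N P s c0 x N := by
  have hres : ∀ n, Measurable (fun ω => resid x (s ω) n) := by
    intro n
    induction n with
    | zero => simpa [resid] using measurable_const
    | succ k ih =>
      have hsk : Measurable (fun ω => s ω k) := (measurable_pi_apply k).comp hmeas
      simp only [resid]
      exact (((measurable_const.max ih).add hsk).sub measurable_const)
  set E : ℕ → ℕ → Set Ω := fun k t =>
    {ω | (∀ j, k ≤ j → j < t → 0 < resid x (s ω) j) ∧ resid x (s ω) t ≤ 0} with hE
  have hEmeas : ∀ k t, MeasurableSet (E k t) := by
    intro k t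
    have h : E k t = (⋂ j ∈ Set.Ico k t, {ω | 0 < resid x (s ω) j}) ∩
        {ω | resid x (s ω) t ≤ 0} := by
      ext ω
      simp only [hE, Set.mem_setOf_eq, Set.mem_inter_iff, Set.mem_iInter, Set.mem_Ico]
      tauto
    rw [h]
    exact (MeasurableSet.biInter (Set.to_countable _)
      (fun j _ => measurableSet_lt measurable_const (hres j))).inter
      (measurableSet_le (hres t) measurable_const)
  have hEkk : ∀ k, E k k = {ω | resid x (s ω) k ≤ 0} := by
    intro k
    ext ω
    simp only [hE, Set.mem_setOf_eq, and_iff_right_iff_imp]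
    intro _ j h1 h2
    omega
  -- rewrite zetaPrice as a single sum
  have hzeta : ∀ k, k ≤ N → zetaPrice N P s c0 x k =
      c0 * ∑ t ∈ Finset.Icc k N, (P (E k t)).toReal := by
    intro k hk
    rw [Finset.Icc_eq_cons_Ioc hk, Finset.sum_cons, ← Finset.Icc_add_one_left_eq_Ioc, hEkk]
    rfl
  -- disjointness and the union formula
  have hdisj' : ∀ k t1 t2, k ≤ t1 → t1 < t2 → Disjoint (E k t1) (E k t2) := by
    intro k t1 t2 hk h
    refine Set.disjoint_left.2 fun ω hω1 hω2 => ?_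
    exact absurd hω1.2 (not_le.2 (hω2.1 t1 hk h))
  have hdisj : ∀ k, (Finset.Icc k N : Set ℕ).PairwiseDisjoint (E k) := by
    intro k t1 h1 t2 h2 hne
    simp only [Finset.coe_Icc, Set.mem_Icc] at h1 h2
    rcases Nat.lt_or_ge t1 t2 with h | h
    · exact hdisj' k t1 t2 h1.1 h
    · exact (hdisj' k t2 t1 h2.1 (lt_of_le_of_ne h (Ne.symm hne))).symm
  have hsum : ∀ k, ∑ t ∈ Finset.Icc k N, P (E k t) = P (⋃ t ∈ Finset.Icc k N, E k t) := by
    intro k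
    exact (measure_biUnion_finset (hdisj k) (fun t _ => hEmeas k t)).symm
  have htoReal : ∀ k, ∑ t ∈ Finset.Icc k N, (P (E k t)).toReal =
      (P (⋃ t ∈ Finset.Icc k N, E k t)).toReal := by
    intro k
    rw [← hsum k, ENNReal.toReal_sum]
    exact fun t _ => measure_ne_top P _
  -- the union events are decreasing in k
  have hUnion_mono : ∀ k, k ≤ N → (⋃ t ∈ Finset.Icc (k + 1) N, E (k + 1) t) ⊆
      ⋃ t ∈ Finset.Icc k N, E k t := by
    intro k hk ω hω
    simp only [Set.mem_iUnion, Finset.mem_Icc] at hω ⊢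
    obtain ⟨t, ⟨ht1, ht2⟩, hpos, hle⟩ := hω
    by_cases h0 : resid x (s ω) k ≤ 0
    · exact ⟨k, ⟨le_refl k, hk⟩, (hEkk k ▸ h0 : ω ∈ E k k)⟩
    · refine ⟨t, ⟨by omega, ht2⟩, ⟨fun j hj1 hj2 => ?_, hle⟩⟩
      rcases Nat.eq_or_lt_of_le hj1 with h | h
      · exact h ▸ lt_of_not_ge h0
      · exact hpos j h hj2
  have hb : ∀ k, (P (⋃ t ∈ Finset.Icc k N, E k t)).toReal ≤ 1 := by
    intro k
    have := measure_mono (Set.subset_univ (⋃ t ∈ Finset.Icc k N, E k t)) (μ := P)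
    rw [measure_univ] at this
    exact ENNReal.toReal_le_of_le_ofReal zero_le_one (by simpa using this)
  refine ⟨?_, ?_, ?_⟩
  · rw [hzeta 1 hN, htoReal 1]
    calc c0 * (P (⋃ t ∈ Finset.Icc 1 N, E 1 t)).toReal ≤ c0 * 1 :=
          mul_le_mul_of_nonneg_left (hb 1) hc0.le
      _ = c0 := mul_one c0
  · intro k hk1 hkN
    rw [hzeta k hkN.le, hzeta (k + 1) hkN, htoReal, htoReal]
    refine mul_le_mul_of_nonneg_left ?_ hc0.le
    refine ENNReal.toReal_mono (measure_ne_top P _) (measure_mono (hUnion_mono k hkN.le))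
  · unfold zetaPrice
    exact mul_nonneg hc0.le (add_nonneg ENNReal.toReal_nonneg
      (Finset.sum_nonneg fun t _ => ENNReal.toReal_nonneg))
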